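/- Let K = 3, β = 1/10, c₀ = 9/10, and let u₂₀₀(x) = −1/(2c₀) − cos(2x)/(2(c₀ − 4 + 16β)), u₁₁₀(x) = −cos(2x)/(c₀ − 4 + 16β) − cos(4x)/(c₀ − 16 + 256β), u₀₂₀(x) = −1/(2c₀) − cos(6x)/(2(c₀ − 36 + 1296β)). Then for all a, b ∈ ℝ: (1/π)∫_{−π}^{π} 2(a·cos(x) + b·cos(3x))·(a²·u₂₀₀(x) + ab·u₁₁₀(x) + b²·u₀₂₀(x))·cos(x) dx = −(7/9)a³ + a²b − (34/63)ab², and (1/π)∫_{−π}^{π} 2(a·cos(x) + b·cos(3x))·(a²·u₂₀₀(x) + ab·u₁₁₀(x) + b²·u₀₂₀(x))·cos(3x) dx = (1/3)a³ − (34/63)a²b − (211/189)b³. -/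

import Mathlib

open Real

private lemma kawW_rec (n : ℕ) :
    (∫ x in (-Real.pi)..Real.pi, Real.cos x ^ (n + 2))
      = (n + 1) / (n + 2) * ∫ x in (-Real.pi)..Real.pi, Real.cos x ^ n := by
  rw [integral_cos_pow]
  simp [Real.sin_pi]

private lemma kawW2 : (∫ x in (-Real.pi)..Real.pi, Real.cos x ^ 2) = Real.pi := by
  simp [Real.sin_pi]

private lemma kawW4 : (∫ x in (-Real.pi)..Real.pi, Real.cos x ^ 4) = 3 / 4 * Real.pi := by
  have h := kawW_rec 2
  norm_num [kawW2] at h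
  linarith

private lemma kawW6 : (∫ x in (-Real.pi)..Real.pi, Real.cos x ^ 6) = 5 / 8 * Real.pi := by
  have h := kawW_rec 4
  norm_num [kawW4] at h
  linarith

private lemma kawW8 : (∫ x in (-Real.pi)..Real.pi, Real.cos x ^ 8) = 35 / 64 * Real.pi := by
  have h := kawW_rec 6
  norm_num [kawW6] at h
  linarith

private lemma kawW10 : (∫ x in (-Real.pi)..Real.pi, Real.cos x ^ 10) = 63 / 128 * Real.pi := by
  have h := kawW_rec 8
  norm_num [kawW8] at h
  linarith

private lemma kawW12 : (∫ x in (-Real.pi)..Real.pi, Real.cos x ^ 12) = 231 / 512 * Real.pi := by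
  have h := kawW_rec 10
  norm_num [kawW10] at h
  linarith

private lemma kawSplit (c : ℝ) (n : ℕ) (g : ℝ → ℝ) (hg : Continuous g) :
    (∫ x in (-Real.pi)..Real.pi, (c * Real.cos x ^ n + g x))
      = c * (∫ x in (-Real.pi)..Real.pi, Real.cos x ^ n)
        + ∫ x in (-Real.pi)..Real.pi, g x := by
  rw [intervalIntegral.integral_add (f := fun x => c * Real.cos x ^ n)
      (((continuous_const.mul (Real.continuous_cos.pow n))).intervalIntegrable _ _)
      (hg.intervalIntegrable _ _), intervalIntegral.integral_const_mul]

/-- The cubic terms of the Lyapunov–Schmidt bifurcation equation for the Kawahara Wilton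
ripples with K = 3 (β = 1/10, c₀ = 9/10). -/
theorem kawahara_cubic_terms_K3 (β c₀ : ℝ)
    (hβ : β = 1 / 10) (hc₀ : c₀ = 9 / 10)
    (u200 u110 u020 : ℝ → ℝ)
    (hu200 : ∀ x : ℝ, u200 x =
      -1 / (2 * c₀) - Real.cos (2 * x) / (2 * (c₀ - 4 + 16 * β)))
    (hu110 : ∀ x : ℝ, u110 x =
      -Real.cos (2 * x) / (c₀ - 4 + 16 * β) - Real.cos (4 * x) / (c₀ - 16 + 256 * β))
    (hu020 : ∀ x : ℝ, u020 x =
      -1 / (2 * c₀) - Real.cos (6 * x) / (2 * (c₀ - 36 + 1296 * β))) :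
    ∀ a b : ℝ,
      (1 / Real.pi) * (∫ x in (-Real.pi)..Real.pi,
          2 * (a * Real.cos x + b * Real.cos (3 * x))
            * (a ^ 2 * u200 x + a * b * u110 x + b ^ 2 * u020 x) * Real.cos x)
        = -(7 / 9) * a ^ 3 + a ^ 2 * b - (34 / 63) * a * b ^ 2 ∧
      (1 / Real.pi) * (∫ x in (-Real.pi)..Real.pi,
          2 * (a * Real.cos x + b * Real.cos (3 * x))
            * (a ^ 2 * u200 x + a * b * u110 x + b ^ 2 * u020 x) * Real.cos (3 * x))
        = (1 / 3) * a ^ 3 - (34 / 63) * a ^ 2 * b - (211 / 189) * b ^ 3 := by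
  subst hβ hc₀
  intro a b
  have hπ := Real.pi_ne_zero
  constructor
  · have h1 : (∫ x in (-Real.pi)..Real.pi,
        2 * (a * Real.cos x + b * Real.cos (3 * x))
          * (a ^ 2 * u200 x + a * b * u110 x + b ^ 2 * u020 x) * Real.cos x)
        = ∫ x in (-Real.pi)..Real.pi,
          ((-16/9*a^3 + 80/21*a^2*b + 656/189*a*b^2 + 208/63*b^3) * Real.cos x ^ 2
          + ((4/3*a^3 - 436/63*a^2*b - 132/7*a*b^2 - 724/189*b^3) * Real.cos x ^ 4
          + ((80/21*a^2*b + 1376/63*a*b^2 - 16/7*b^3) * Real.cos x ^ 6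
          + ((-1216/189*a*b^2 + 64/21*b^3) * Real.cos x ^ 8
          + (-256/189*b^3) * Real.cos x ^ 10)))) := by
      refine intervalIntegral.integral_congr fun x _ => ?_
      rw [hu200 x, hu110 x, hu020 x,
        show (6:ℝ) * x = 2 * (3 * x) by ring, show (4:ℝ) * x = 2 * (2 * x) by ring]
      simp only [Real.cos_two_mul, Real.cos_three_mul]
      ring
    rw [h1, kawSplit _ 2 _ (by fun_prop), kawSplit _ 4 _ (by fun_prop),
      kawSplit _ 6 _ (by fun_prop), kawSplit _ 8 _ (by fun_prop),
      intervalIntegral.integral_const_mul, kawW2, kawW4, kawW6, kawW8, kawW10]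
    rw [one_div, inv_mul_eq_div, div_eq_iff hπ]
    ring
  · have h1 : (∫ x in (-Real.pi)..Real.pi,
        2 * (a * Real.cos x + b * Real.cos (3 * x))
          * (a ^ 2 * u200 x + a * b * u110 x + b ^ 2 * u020 x) * Real.cos (3 * x))
        = ∫ x in (-Real.pi)..Real.pi,
          ((16/3*a^3 - 80/7*a^2*b - 656/63*a*b^2 - 208/21*b^3) * Real.cos x ^ 2
          + ((-100/9*a^3 + 36*a^2*b + 13316/189*a*b^2 + 1556/63*b^3) * Real.cos x ^ 4
          + ((16/3*a^3 - 352/9*a^2*b - 2960/21*a*b^2 - 1600/189*b^3) * Real.cos x ^ 6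
          + ((320/21*a^2*b + 320/3*a*b^2 - 128/7*b^3) * Real.cos x ^ 8
          + ((-4864/189*a*b^2 + 1024/63*b^3) * Real.cos x ^ 10
          + (-1024/189*b^3) * Real.cos x ^ 12))))) := by
      refine intervalIntegral.integral_congr fun x _ => ?_
      rw [hu200 x, hu110 x, hu020 x,
        show (6:ℝ) * x = 2 * (3 * x) by ring, show (4:ℝ) * x = 2 * (2 * x) by ring]
      simp only [Real.cos_two_mul, Real.cos_three_mul]
      ring
    rw [h1, kawSplit _ 2 _ (by fun_prop), kawSplit _ 4 _ (by fun_prop),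
      kawSplit _ 6 _ (by fun_prop), kawSplit _ 8 _ (by fun_prop),
      kawSplit _ 10 _ (by fun_prop),
      intervalIntegral.integral_const_mul, kawW2, kawW4, kawW6, kawW8, kawW10, kawW12]
    rw [one_div, inv_mul_eq_div, div_eq_iff hπ]
    ring
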